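/- Let G be a separable, non-pseudocompact topological group admitting a closed suitable set. Then s_c(G) ≤ ℵ₀, i.e., G has a countable closed suitable set; in particular d(G) = s_c(G) + ℵ₀. -/

import Mathlib

open Filter Topology

/-- A closed suitable set: closed, discrete as a subspace, generating a dense subgroup. -/
def IsClosedSuitable {G : Type*} [Group G] [TopologicalSpace G] (S : Set G) : Prop :=
  (∀ x ∈ S, ∃ U : Set G, IsOpen U ∧ U ∩ S = {x}) ∧ IsClosed S ∧
    Dense (Subgroup.closure S : Set G)

/-- The density `d(X)`: least cardinality of a dense subset. -/
noncomputable def densityCard (X : Type*) [TopologicalSpace X] : Cardinal :=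
  sInf {κ : Cardinal | ∃ D : Set X, Dense D ∧ Cardinal.mk D = κ}

/-- The minimal cardinality `s_c(G)` of a closed suitable set. -/
noncomputable def scCard (G : Type*) [Group G] [TopologicalSpace G] : Cardinal :=
  sInf {κ : Cardinal | ∃ S : Set G, IsClosedSuitable S ∧ Cardinal.mk S = κ}

/-- A space is pseudocompact if every continuous real-valued function is bounded. -/
def Pseudocompact (X : Type*) [TopologicalSpace X] : Prop :=
  ∀ f : C(X, ℝ), ∃ M : ℝ, ∀ x : X, |f x| ≤ M

section Aux

variable {G : Type*} [Group G] [TopologicalSpace G] [IsTopologicalGroup G]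

/-- Closedness/discreteness certificate: if every point of `G` has a neighbourhood meeting
`C` in a finite set, then (in a `T1` group) `C` is closed and discrete. -/
lemma cert_suitable [T1Space G] {C : Set G}
    (hcert : ∀ g : G, ∃ U : Set G, IsOpen U ∧ g ∈ U ∧ (U ∩ C).Finite)
    (hdense : Dense (Subgroup.closure C : Set G)) : IsClosedSuitable C := by
  refine ⟨?_, ?_, hdense⟩
  · intro x hx
    obtain ⟨U, hUo, hxU, hUf⟩ := hcert x
    refine ⟨U \ ((U ∩ C) \ {x}), hUo.sdiff ((hUf.subset Set.diff_subset).isClosed), ?_⟩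
    ext y
    constructor
    · rintro ⟨⟨hyU, hyK⟩, hyC⟩
      by_contra hne
      exact hyK ⟨⟨hyU, hyC⟩, hne⟩
    · rintro (rfl : y = x)
      exact ⟨⟨hxU, fun h => h.2 rfl⟩, hx⟩
  · apply isClosed_of_closure_subset
    intro g hg
    obtain ⟨U, hUo, hgU, hUf⟩ := hcert g
    by_contra hgC
    have hK : IsClosed (U ∩ C) := hUf.isClosed
    have hgo : g ∈ U \ (U ∩ C) := ⟨hgU, fun h => hgC h.2⟩
    obtain ⟨y, hy1, hy2⟩ := mem_closure_iff.mp hg (U \ (U ∩ C)) (hUo.sdiff hK) hgo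
    exact hy1.2 ⟨hy1.1, hy2⟩

/-- The recursive chain of points used in the non-precompact case. -/
def npChain (pick : List G → ℕ → G) (d : ℕ → G) : ℕ → List G
  | 0 => []
  | n + 1 =>
    pick (npChain pick d n) n :: (d n * pick (npChain pick d n) n) :: npChain pick d n

/-- The non-precompact case: some nonempty open set admits no finite cover by
left translates.  Then a countable closed suitable set can be built from pairs
`(yₙ, dₙ * yₙ)` which are uniformly separated. -/
lemma case_nonprecompact [T1Space G] (d : ℕ → G) (hd : DenseRange d)
    (U₀ : Set G) (hU₀o : IsOpen U₀) (u₀ : G) (hu₀ : u₀ ∈ U₀)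
    (hbad : ∀ F : Finset G, ∃ g : G, ∀ t ∈ F, t⁻¹ * g ∉ U₀) :
    ∃ C : Set G, C.Countable ∧ IsClosedSuitable C := by
  classical
  set U₁ : Set G := (fun x => u₀ * x) ⁻¹' U₀ with hU₁def
  have hU₁o : IsOpen U₁ := hU₀o.preimage (continuous_const.mul continuous_id)
  set U₂ : Set G := U₁ ∩ (fun x : G => x⁻¹) ⁻¹' U₁ with hU₂def
  have hU₂o : IsOpen U₂ := hU₁o.inter (hU₁o.preimage continuous_inv)
  have hU₂1 : (1 : G) ∈ U₂ := by
    constructor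
    · show u₀ * 1 ∈ U₀; simpa using hu₀
    · show u₀ * (1 : G)⁻¹ ∈ U₀; simpa using hu₀
  have hU₂sym : ∀ x ∈ U₂, x⁻¹ ∈ U₂ := by
    rintro x ⟨h1, h2⟩
    exact ⟨h2, by simpa using h1⟩
  have hbad₂ : ∀ F : Finset G, ∃ g : G, ∀ t ∈ F, t⁻¹ * g ∉ U₂ := by
    intro F
    obtain ⟨g, hg⟩ := hbad (F.image (fun t => t * u₀⁻¹))
    refine ⟨g, fun t ht hmem => ?_⟩
    apply hg (t * u₀⁻¹) (Finset.mem_image_of_mem _ ht)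
    have h1 : u₀ * (t⁻¹ * g) ∈ U₀ := hmem.1
    have : (t * u₀⁻¹)⁻¹ * g = u₀ * (t⁻¹ * g) := by
      rw [mul_inv_rev]; simp [mul_assoc]
    rw [this]; exact h1
  obtain ⟨V₀, hV₀o, hV₀1, hV₀m⟩ :=
    exists_open_nhds_one_mul_subset (hU₂o.mem_nhds hU₂1)
  set V : Set G := V₀ ∩ (fun x : G => x⁻¹) ⁻¹' V₀ with hVdef
  have hVo : IsOpen V := hV₀o.inter (hV₀o.preimage continuous_inv)
  have hV1 : (1 : G) ∈ V := ⟨hV₀1, by simpa using hV₀1⟩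
  have hVsym : ∀ x ∈ V, x⁻¹ ∈ V := by
    rintro x ⟨h1, h2⟩
    exact ⟨h2, by simpa using h1⟩
  have hVmul : ∀ a b : G, a ∈ V → b ∈ V → a * b ∈ U₂ := fun a b ha hb =>
    hV₀m (Set.mul_mem_mul ha.1 hb.1)
  -- the recursive choice of points
  set pick : List G → ℕ → G := fun l n =>
    Classical.choose (hbad₂ (l.toFinset ∪ (l.map (fun x => (d n)⁻¹ * x)).toFinset)) with hpickdef
  have hpick : ∀ (l : List G) (n : ℕ),
      ∀ t ∈ l.toFinset ∪ (l.map (fun x => (d n)⁻¹ * x)).toFinset, t⁻¹ * pick l n ∉ U₂ :=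
    fun l n => Classical.choose_spec (hbad₂ (l.toFinset ∪ (l.map (fun x => (d n)⁻¹ * x)).toFinset))
  set chain : ℕ → List G := npChain pick d with hchaindef
  have chain_succ : ∀ n, chain (n + 1) =
      pick (chain n) n :: (d n * pick (chain n) n) :: chain n := fun n => rfl
  set Y : ℕ → G := fun n => pick (chain n) n with hYdef
  have chain_mono : ∀ m n, m ≤ n → ∀ x, x ∈ chain m → x ∈ chain n := by
    intro m n hmn
    induction n, hmn using Nat.le_induction with
    | base => exact fun x hx => hx
    | succ n hmn ih =>
      intro x hx
      rw [chain_succ n]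
      exact List.mem_cons_of_mem _ (List.mem_cons_of_mem _ (ih x hx))
  have chain_elts : ∀ n x, x ∈ chain n → ∃ m, m < n ∧ (x = Y m ∨ x = d m * Y m) := by
    intro n
    induction n with
    | zero => intro x hx; simp [hchaindef, npChain] at hx
    | succ n ih =>
      intro x hx
      rw [chain_succ n] at hx
      rcases List.mem_cons.mp hx with h | hx'
      · exact ⟨n, n.lt_succ_self, Or.inl h⟩
      rcases List.mem_cons.mp hx' with h | hx''
      · exact ⟨n, n.lt_succ_self, Or.inr h⟩
      · obtain ⟨m, hm, hh⟩ := ih x hx''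
        exact ⟨m, hm.trans n.lt_succ_self, hh⟩
  have sep : ∀ n x, x ∈ chain n → x⁻¹ * Y n ∉ U₂ ∧ x⁻¹ * (d n * Y n) ∉ U₂ := by
    intro n x hx
    constructor
    · exact hpick (chain n) n x (Finset.mem_union_left _ (List.mem_toFinset.mpr hx))
    · have h := hpick (chain n) n ((d n)⁻¹ * x)
        (Finset.mem_union_right _ (List.mem_toFinset.mpr (List.mem_map_of_mem hx)))
      intro hmem
      apply h
      have heq : ((d n)⁻¹ * x)⁻¹ * Y n = x⁻¹ * (d n * Y n) := by
        rw [mul_inv_rev]; simp [mul_assoc]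
      rw [heq]; exact hmem
  have pairsep : ∀ m k, m < k → ∀ p q : G, (p = Y m ∨ p = d m * Y m) →
      (q = Y k ∨ q = d k * Y k) → p⁻¹ * q ∉ U₂ := by
    intro m k hmk p q hp hq
    have hpchain : p ∈ chain k := by
      have h1 : p ∈ chain (m + 1) := by
        rw [chain_succ m]
        rcases hp with rfl | rfl
        · exact List.mem_cons_self
        · exact List.mem_cons_of_mem _ (List.mem_cons_self)
      exact chain_mono (m + 1) k hmk p h1
    rcases hq with rfl | rfl
    · exact (sep k p hpchain).1
    · exact (sep k p hpchain).2
  set C : Set G := ⋃ n, {x | x ∈ chain n} with hCdef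
  have hCc : C.Countable := Set.countable_iUnion fun n => (chain n).finite_toSet.countable
  have hmemC : ∀ x, x ∈ C ↔ ∃ n, x ∈ chain n := fun x => Set.mem_iUnion
  have hYC : ∀ n, Y n ∈ C ∧ d n * Y n ∈ C := by
    intro n
    constructor
    · exact (hmemC _).mpr ⟨n + 1, by rw [chain_succ n]; exact List.mem_cons_self⟩
    · exact (hmemC _).mpr ⟨n + 1, by
        rw [chain_succ n]; exact List.mem_cons_of_mem _ (List.mem_cons_self)⟩
  have hidx : ∀ x, x ∈ C → ∃ m, x = Y m ∨ x = d m * Y m := by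
    intro x hx
    obtain ⟨n, hn⟩ := (hmemC x).mp hx
    obtain ⟨m, _, h⟩ := chain_elts n x hn
    exact ⟨m, h⟩
  have hcert : ∀ g : G, ∃ U : Set G, IsOpen U ∧ g ∈ U ∧ (U ∩ C).Finite := by
    intro g
    refine ⟨(fun h => g⁻¹ * h) ⁻¹' V,
      hVo.preimage (continuous_const.mul continuous_id), by
        show g⁻¹ * g ∈ V; simpa using hV1, ?_⟩
    by_cases hne : (((fun h => g⁻¹ * h) ⁻¹' V) ∩ C).Nonempty
    · obtain ⟨p, hpV, hpC⟩ := hne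
      obtain ⟨np, hp⟩ := hidx p hpC
      apply Set.Finite.subset ((Set.finite_singleton (Y np)).insert (d np * Y np))
      rintro q ⟨hqV, hqC⟩
      obtain ⟨nq, hq⟩ := hidx q hqC
      have hU2mem : p⁻¹ * q ∈ U₂ := by
        have ha : g⁻¹ * p ∈ V := hpV
        have hb : g⁻¹ * q ∈ V := hqV
        have heq : (g⁻¹ * p)⁻¹ * (g⁻¹ * q) = p⁻¹ * q := by
          rw [mul_inv_rev]; simp [mul_assoc]
        have := hVmul _ _ (hVsym _ ha) hb
        rwa [heq] at this
      have hsame : nq = np := by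
        by_contra hne'
        rcases lt_or_gt_of_ne hne' with h | h
        · -- nq < np : q older, p newer
          have hnot := pairsep nq np h q p hq hp
          have h2 : q⁻¹ * p ∈ U₂ := by
            have h3 := hU₂sym _ hU2mem
            rwa [mul_inv_rev, inv_inv] at h3
          exact hnot h2
        · exact pairsep np nq h p q hp hq hU2mem
      subst hsame
      rcases hq with rfl | rfl
      · exact Set.mem_insert_of_mem _ rfl
      · exact Set.mem_insert _ _
    · rw [Set.not_nonempty_iff_eq_empty] at hne
      rw [hne]; exact Set.finite_empty
  have hdense : Dense (Subgroup.closure C : Set G) := by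
    refine Dense.mono ?_ hd
    rintro x ⟨n, rfl⟩
    have h1 : d n * Y n ∈ Subgroup.closure C := Subgroup.subset_closure (hYC n).2
    have h2 : Y n ∈ Subgroup.closure C := Subgroup.subset_closure (hYC n).1
    have heq : d n = d n * Y n * (Y n)⁻¹ := by simp
    show d n ∈ (Subgroup.closure C : Set G)
    rw [heq]
    exact mul_mem h1 (inv_mem h2)
  exact ⟨C, hCc, cert_suitable hcert hdense⟩

/-- The precompact case: every nonempty open set admits a finite cover by left
translates.  Build a countable closed suitable set from chained transversals of the
level sets of an unbounded continuous real function. -/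
lemma case_precompact [T1Space G] (d : ℕ → G) (hd : DenseRange d)
    (f : C(G, ℝ)) (hf : ∀ M : ℝ, ∃ x, M < |f x|)
    (hpc : ∀ U : Set G, IsOpen U → U.Nonempty →
      ∃ F : Finset G, ∀ g : G, ∃ t ∈ F, t⁻¹ * g ∈ U) :
    ∃ C : Set G, C.Countable ∧ IsClosedSuitable C := by
  classical
  set V : ℕ → Set G := fun n => {x | (n : ℝ) < |f x|} with hVdef
  have hVo : ∀ n, IsOpen (V n) := fun n => isOpen_lt continuous_const f.continuous.abs
  have hVne : ∀ n, (V n).Nonempty := fun n => hf n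
  have hT : ∀ n, ∃ F : Finset G, ∀ g : G, ∃ t ∈ F, t⁻¹ * g ∈ V n :=
    fun n => hpc (V n) (hVo n) (hVne n)
  set T : ℕ → Finset G := fun n => Classical.choose (hT n) with hTdef
  have hTs : ∀ n (g : G), ∃ t ∈ T n, t⁻¹ * g ∈ V n := fun n g => Classical.choose_spec (hT n) g
  set rep : ℕ → G → G := fun n g => Classical.choose (hTs n g) with hrepdef
  have hreps : ∀ n (g : G), rep n g ∈ T n ∧ (rep n g)⁻¹ * g ∈ V n :=
    fun n g => Classical.choose_spec (hTs n g)
  set B : ℕ → Set G :=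
    fun n => (fun t => (rep n t)⁻¹ * t) '' (T (n + 1) : Set G) ∪ {(rep n (d n))⁻¹ * d n}
    with hBdef
  have hBfin : ∀ n, (B n).Finite :=
    fun n => ((T (n + 1)).finite_toSet.image _).union (Set.finite_singleton _)
  have hBV : ∀ n, B n ⊆ V n := by
    rintro n x (⟨t, _, rfl⟩ | rfl)
    · exact (hreps n t).2
    · exact (hreps n (d n)).2
  set C : Set G := ↑(T 0) ∪ ⋃ n, B n with hCdef
  have hCc : C.Countable :=
    ((T 0).finite_toSet.countable).union (Set.countable_iUnion fun n => (hBfin n).countable)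
  have hTC : ∀ n, ∀ t ∈ T n, (t : G) ∈ Subgroup.closure C := by
    intro n
    induction n with
    | zero =>
      intro t ht
      exact Subgroup.subset_closure (Set.mem_union_left _ ht)
    | succ n ih =>
      intro t ht
      have h1 : rep n t ∈ Subgroup.closure C := ih _ (hreps n t).1
      have h2 : (rep n t)⁻¹ * t ∈ Subgroup.closure C :=
        Subgroup.subset_closure (Set.mem_union_right _
          (Set.mem_iUnion.mpr ⟨n, Set.mem_union_left _ ⟨t, ht, rfl⟩⟩))
      have heq : t = rep n t * ((rep n t)⁻¹ * t) := by rw [mul_inv_cancel_left]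
      rw [heq]; exact mul_mem h1 h2
  have hdC : ∀ n, d n ∈ Subgroup.closure C := by
    intro n
    have h1 : rep n (d n) ∈ Subgroup.closure C := hTC n _ (hreps n (d n)).1
    have h2 : (rep n (d n))⁻¹ * d n ∈ Subgroup.closure C :=
      Subgroup.subset_closure (Set.mem_union_right _
        (Set.mem_iUnion.mpr ⟨n, Set.mem_union_right _ rfl⟩))
    have heq : d n = rep n (d n) * ((rep n (d n))⁻¹ * d n) := by rw [mul_inv_cancel_left]
    rw [heq]; exact mul_mem h1 h2
  have hdense : Dense (Subgroup.closure C : Set G) := by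
    refine Dense.mono ?_ hd
    rintro x ⟨n, rfl⟩
    exact hdC n
  have hcert : ∀ g : G, ∃ U : Set G, IsOpen U ∧ g ∈ U ∧ (U ∩ C).Finite := by
    intro g
    obtain ⟨N, hN⟩ := exists_nat_gt |f g|
    refine ⟨{x | |f x| < (N : ℝ)}, isOpen_lt f.continuous.abs continuous_const, hN, ?_⟩
    have hsub : {x | |f x| < (N : ℝ)} ∩ C ⊆ ↑(T 0) ∪ ⋃ n ∈ Set.Iio N, B n := by
      rintro x ⟨hxU, hxC⟩
      rcases hxC with h | h
      · exact Or.inl h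
      · obtain ⟨n, hn⟩ := Set.mem_iUnion.mp h
        have hnN : n < N := by
          by_contra hcon
          push_neg at hcon
          have h1 : (n : ℝ) < |f x| := hBV n hn
          have h2 : |f x| < (N : ℝ) := hxU
          have h3 : (N : ℝ) ≤ (n : ℝ) := Nat.cast_le.mpr hcon
          linarith
        exact Or.inr (Set.mem_biUnion (Set.mem_Iio.mpr hnN) hn)
    exact Set.Finite.subset
      (((T 0).finite_toSet).union ((Set.finite_Iio N).biUnion fun n _ => hBfin n)) hsub
  exact ⟨C, hCc, cert_suitable hcert hdense⟩

end Aux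

/-- A separable non-pseudocompact topological group with a closed suitable set has a
countable closed suitable set, i.e. `s_c(G) ≤ ℵ₀`; in particular `d(G) = s_c(G) + ℵ₀`. -/
theorem separable_nonPseudocompact_scCard_le_aleph0 {G : Type*} [Group G]
    [TopologicalSpace G] [IsTopologicalGroup G] [TopologicalSpace.SeparableSpace G]
    (hnp : ¬ Pseudocompact G) (hS : ∃ S : Set G, IsClosedSuitable S) :
    scCard G ≤ Cardinal.aleph0 ∧ densityCard G = scCard G + Cardinal.aleph0 := by
  classical
  have hnp' : ∃ f : C(G, ℝ), ∀ M : ℝ, ∃ x : G, M < |f x| := by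
    unfold Pseudocompact at hnp
    push_neg at hnp
    exact hnp
  obtain ⟨f, hf⟩ := hnp'
  haveI : Nonempty G := ⟨1⟩
  -- `G` is T1
  haveI hT1 : T1Space G := by
    obtain ⟨S, hSd, hScl, hSg⟩ := hS
    rcases Set.eq_empty_or_nonempty S with rfl | ⟨x₀, hx₀⟩
    · exfalso
      rw [Subgroup.closure_empty] at hSg
      have h1 : Dense ({(1 : G)} : Set G) := by
        simpa [Subgroup.coe_bot] using hSg
      obtain ⟨x, hx⟩ := hf |f 1|
      have hx1 : x ∈ closure ({(1 : G)} : Set G) := h1 x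
      have hxc : f x ∈ closure (f '' {(1 : G)}) :=
        image_closure_subset_closure_image f.continuous (Set.mem_image_of_mem f hx1)
      rw [Set.image_singleton, closure_singleton, Set.mem_singleton_iff] at hxc
      rw [hxc] at hx
      exact lt_irrefl _ hx
    · obtain ⟨U, hUo, hUS⟩ := hSd x₀ hx₀
      have hx₀U : x₀ ∈ U := by
        have h : x₀ ∈ U ∩ S := by rw [hUS]; rfl
        exact h.1
      have h1closed : IsClosed ({(1 : G)} : Set G) := by
        apply isClosed_of_closure_subset
        intro n hn
        -- `x₀ * n ∈ closure {x₀} ⊆ S`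
        have h2 : x₀ * n ∈ closure ({x₀} : Set G) := by
          rw [mem_closure_iff]
          intro O hOo hO
          have hWo : IsOpen {w : G | x₀ * w ∈ O} := hOo.preimage (continuous_const.mul continuous_id)
          have hWn : n ∈ {w : G | x₀ * w ∈ O} := hO
          obtain ⟨y, hy1, hy2⟩ := mem_closure_iff.mp hn _ hWo hWn
          rw [Set.mem_singleton_iff] at hy2
          subst hy2
          exact ⟨x₀, by simpa using hy1, rfl⟩
        have h3 : x₀ * n ∈ S := by
          have hsub : closure ({x₀} : Set G) ⊆ S := by
            rw [← hScl.closure_eq]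
            exact closure_mono (Set.singleton_subset_iff.mpr hx₀)
          exact hsub h2
        -- `1 ∈ closure {n}`
        have h4 : (1 : G) ∈ closure ({n} : Set G) := by
          rw [mem_closure_iff]
          intro O hOo hO1
          have hWo : IsOpen {x : G | x⁻¹ * n ∈ O} :=
            hOo.preimage (continuous_inv.mul continuous_const)
          have hWn : n ∈ {x : G | x⁻¹ * n ∈ O} := by
            show n⁻¹ * n ∈ O; simpa using hO1
          obtain ⟨y, hy1, hy2⟩ := mem_closure_iff.mp hn _ hWo hWn
          rw [Set.mem_singleton_iff] at hy2
          subst hy2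
          exact ⟨n, by simpa using hy1, rfl⟩
        -- hence `x₀ ∈ closure {x₀ * n}` and so `x₀ * n ∈ U`
        have h5 : x₀ * n ∈ U := by
          have h5' : x₀ ∈ closure ({x₀ * n} : Set G) := by
            rw [mem_closure_iff]
            intro O hOo hO
            have hWo : IsOpen {w : G | x₀ * w ∈ O} :=
              hOo.preimage (continuous_const.mul continuous_id)
            have hW1 : (1 : G) ∈ {w : G | x₀ * w ∈ O} := by
              show x₀ * 1 ∈ O; simpa using hO
            obtain ⟨y, hy1, hy2⟩ := mem_closure_iff.mp h4 _ hWo hW1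
            rw [Set.mem_singleton_iff] at hy2
            rw [hy2] at hy1
            exact ⟨x₀ * n, hy1, rfl⟩
          obtain ⟨y, hy1, hy2⟩ := mem_closure_iff.mp h5' U hUo hx₀U
          rw [Set.mem_singleton_iff] at hy2
          rwa [← hy2]
        have h6 : x₀ * n ∈ U ∩ S := ⟨h5, h3⟩
        rw [hUS, Set.mem_singleton_iff] at h6
        have hn1 : n = 1 := by
          have := h6
          calc n = x₀⁻¹ * (x₀ * n) := by simp [mul_assoc]
          _ = x₀⁻¹ * x₀ := by rw [this]
          _ = 1 := by simp
        rw [Set.mem_singleton_iff]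
        exact hn1
      exact IsTopologicalGroup.t1Space G h1closed
  -- a countable closed suitable set exists
  have hmain : ∃ C : Set G, C.Countable ∧ IsClosedSuitable C := by
    by_cases hpc : ∀ U : Set G, IsOpen U → U.Nonempty →
        ∃ F : Finset G, ∀ g : G, ∃ t ∈ F, t⁻¹ * g ∈ U
    · exact case_precompact (TopologicalSpace.denseSeq G)
        (TopologicalSpace.denseRange_denseSeq G) f hf hpc
    · push_neg at hpc
      obtain ⟨U₀, hU₀o, hU₀ne, hbad⟩ := hpc
      obtain ⟨u₀, hu₀⟩ := hU₀ne
      exact case_nonprecompact (TopologicalSpace.denseSeq G)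
        (TopologicalSpace.denseRange_denseSeq G) U₀ hU₀o u₀ hu₀ hbad
  obtain ⟨C, hCc, hCs⟩ := hmain
  haveI := hCc.to_subtype
  have h1 : scCard G ≤ Cardinal.aleph0 := by
    have hmem : Cardinal.mk C ∈
        {κ : Cardinal | ∃ S : Set G, IsClosedSuitable S ∧ Cardinal.mk S = κ} := ⟨C, hCs, rfl⟩
    exact le_trans (csInf_le' hmem) Cardinal.mk_le_aleph0
  refine ⟨h1, ?_⟩
  have hd0 : densityCard G = Cardinal.aleph0 := by
    apply le_antisymm
    · haveI := (Set.countable_range (TopologicalSpace.denseSeq G)).to_subtype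
      have hmem : Cardinal.mk (Set.range (TopologicalSpace.denseSeq G)) ∈
          {κ : Cardinal | ∃ D : Set G, Dense D ∧ Cardinal.mk D = κ} :=
        ⟨_, (TopologicalSpace.denseRange_denseSeq G), rfl⟩
      exact le_trans (csInf_le' hmem) Cardinal.mk_le_aleph0
    · apply le_csInf
      · exact ⟨_, Set.univ, dense_univ, rfl⟩
      · rintro κ ⟨D, hD, rfl⟩
        by_contra hlt
        push_neg at hlt
        have hDfin : D.Finite := Cardinal.lt_aleph0_iff_set_finite.mp hlt
        have hA : ((fun x => |f x|) '' D).Finite := hDfin.image _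
        obtain ⟨M, hM⟩ := hA.bddAbove
        obtain ⟨x, hx⟩ := hf M
        have hxD : f x ∈ f '' D := by
          have hcl : f x ∈ closure (f '' D) :=
            image_closure_subset_closure_image f.continuous (Set.mem_image_of_mem f (hD x))
          rwa [((hDfin.image f).isClosed).closure_eq] at hcl
        obtain ⟨y, hyD, hyx⟩ := hxD
        have hb : |f x| ≤ M := by
          have : |f y| ∈ (fun x => |f x|) '' D := Set.mem_image_of_mem _ hyD
          have h := hM this
          rwa [hyx] at h
        linarith
  have h2 : scCard G + Cardinal.aleph0 = Cardinal.aleph0 :=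
    Cardinal.add_eq_right le_rfl h1
  rw [hd0, h2]
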